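/- Let α > 0. If a nonempty set E ⊂ X satisfies the upper Aikawa condition with exponent α, then its closure, cl(E), also satisfies the upper Aikawa condition with exponent α. -/

import Mathlib

open Metric MeasureTheory Set
open scoped ENNReal NNReal

/-- The effective diameter bound: `diam E`, unless `diam E = 0`, in which case `diam X`. -/
noncomputable def diamBound {X : Type*} [PseudoEMetricSpace X] (E : Set X) : ℝ≥0∞ :=
  haveI := Classical.propDecidable
  if EMetric.diam E = 0 then EMetric.diam (Set.univ : Set X) else EMetric.diam E

/-- `E` satisfies the upper Aikawa condition with exponent `α`. -/
def upperAikawaCond {X : Type*} [MetricSpace X] [MeasurableSpace X]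
    (μ : Measure X) (E : Set X) (α : ℝ) : Prop :=
  ∀ ε : ℝ, 0 < ε → ∃ δ : ℝ, 0 < δ ∧
    ∀ z ∈ E, ∀ R : ℝ, 0 < R → ENNReal.ofReal R < diamBound E →
      ∀ K : Set X, MeasurableSet K →
        μ (ball z R \ K) ≤ ENNReal.ofReal δ * μ (ball z R) →
        ENNReal.ofReal (R ^ (-α) / ε) ≤
          (μ (ball z R))⁻¹ *
            ∫⁻ y in ball z R ∩ K, ENNReal.ofReal (infDist y E ^ (-α)) ∂μ

/-- If a nonempty set `E` satisfies the upper Aikawa condition with exponent `α > 0`,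
then so does its closure. -/
theorem upperAikawa_closure {X : Type*} [MetricSpace X] [MeasurableSpace X]
    [BorelSpace X] [Nontrivial X]
    (μ : Measure X) (c_μ : ℝ) (hc : 1 < c_μ)
    (hball : ∀ (x : X) (ρ : ℝ), 0 < ρ → 0 < μ (ball x ρ) ∧ μ (ball x ρ) < ⊤)
    (hdoubling : ∀ (x : X) (ρ : ℝ), 0 < ρ →
      μ (ball x (2 * ρ)) ≤ ENNReal.ofReal c_μ * μ (ball x ρ))
    (α : ℝ) (hα : 0 < α)
    (E : Set X) (hE : E.Nonempty)
    (haik : upperAikawaCond μ E α) :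
    upperAikawaCond μ (closure E) α := by
  intro ε hε
  have hc0 : (0:ℝ) < c_μ := lt_trans one_pos hc
  have h2α : (0:ℝ) < (2:ℝ) ^ α := Real.rpow_pos_of_pos (by norm_num) α
  set ε' := ε * 2 ^ α / c_μ ^ 2 with hε'def
  have hε' : 0 < ε' := by positivity
  obtain ⟨δ', hδ', H⟩ := haik ε' hε'
  refine ⟨δ' / c_μ ^ 2, by positivity, ?_⟩
  intro z hz R hR hRd K hKmeas hK
  have hdiam : diamBound (closure E) = diamBound E := by
    unfold diamBound; rw [show EMetric.diam (closure E) = EMetric.diam E from EMetric.diam_closure ..]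
  rw [hdiam] at hRd
  obtain ⟨z', hz'E, hz'd⟩ := Metric.mem_closure_iff.mp hz (R/2) (by linarith)
  have hR2 : (0:ℝ) < R/2 := by linarith
  have hRd' : ENNReal.ofReal (R/2) < diamBound E :=
    lt_of_le_of_lt (ENNReal.ofReal_le_ofReal (by linarith)) hRd
  have hsub1 : ball z' (R/2) ⊆ ball z R := by
    intro y hy
    rw [mem_ball] at hy ⊢
    have h1 : dist y z ≤ dist y z' + dist z' z := dist_triangle y z' z
    have h2 : dist z' z = dist z z' := dist_comm z' z
    linarith
  have hsub2 : ball z R ⊆ ball z' (2*R) := by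
    intro y hy
    rw [mem_ball] at hy ⊢
    have h1 : dist y z' ≤ dist y z + dist z z' := dist_triangle y z z'
    linarith
  have hd1 := hdoubling z' R hR
  have hd2 := hdoubling z' (R/2) hR2
  rw [show 2 * (R/2) = R by ring] at hd2
  have hmeas1 : μ (ball z R) ≤ ENNReal.ofReal (c_μ^2) * μ (ball z' (R/2)) := by
    calc μ (ball z R) ≤ μ (ball z' (2*R)) := measure_mono hsub2
      _ ≤ ENNReal.ofReal c_μ * μ (ball z' R) := hd1
      _ ≤ ENNReal.ofReal c_μ * (ENNReal.ofReal c_μ * μ (ball z' (R/2))) := by gcongr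
      _ = ENNReal.ofReal (c_μ^2) * μ (ball z' (R/2)) := by
          rw [← mul_assoc, ← ENNReal.ofReal_mul hc0.le]; ring_nf
  have hK' : μ (ball z' (R/2) \ K) ≤ ENNReal.ofReal δ' * μ (ball z' (R/2)) := by
    calc μ (ball z' (R/2) \ K) ≤ μ (ball z R \ K) :=
          measure_mono (diff_subset_diff_left hsub1)
      _ ≤ ENNReal.ofReal (δ'/c_μ^2) * μ (ball z R) := hK
      _ ≤ ENNReal.ofReal (δ'/c_μ^2) * (ENNReal.ofReal (c_μ^2) * μ (ball z' (R/2))) := by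
          gcongr
      _ = ENNReal.ofReal δ' * μ (ball z' (R/2)) := by
          rw [← mul_assoc, ← ENNReal.ofReal_mul (by positivity)]
          congr 2
          field_simp
  have main := H z' hz'E (R/2) hR2 hRd' K hKmeas hK'
  have hcne : ENNReal.ofReal (c_μ^2) ≠ 0 := by
    simp [ENNReal.ofReal_eq_zero]; positivity
  have hcnt : ENNReal.ofReal (c_μ^2) ≠ ⊤ := ENNReal.ofReal_ne_top
  have key : ENNReal.ofReal (R ^ (-α) / ε)
      = (ENNReal.ofReal (c_μ^2))⁻¹ * ENNReal.ofReal ((R/2) ^ (-α) / ε') := by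
    rw [← ENNReal.ofReal_inv_of_pos (by positivity),
      ← ENNReal.ofReal_mul (by positivity)]
    congr 1
    have hRhalf : (R/2 : ℝ) ^ (-α) = R ^ (-α) * 2 ^ α := by
      rw [div_eq_mul_inv, Real.mul_rpow hR.le (by norm_num),
        Real.inv_rpow (by norm_num), ← Real.rpow_neg (by norm_num), neg_neg]
    rw [hRhalf, hε'def]
    field_simp
  rw [key]
  calc (ENNReal.ofReal (c_μ^2))⁻¹ * ENNReal.ofReal ((R/2) ^ (-α) / ε')
      ≤ (ENNReal.ofReal (c_μ^2))⁻¹ * ((μ (ball z' (R/2)))⁻¹ *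
          ∫⁻ y in ball z' (R/2) ∩ K, ENNReal.ofReal (infDist y E ^ (-α)) ∂μ) := by
        gcongr
    _ = (ENNReal.ofReal (c_μ^2) * μ (ball z' (R/2)))⁻¹ *
          ∫⁻ y in ball z' (R/2) ∩ K, ENNReal.ofReal (infDist y E ^ (-α)) ∂μ := by
        rw [ENNReal.mul_inv (Or.inl hcne) (Or.inl hcnt), mul_assoc]
    _ ≤ (μ (ball z R))⁻¹ *
          ∫⁻ y in ball z R ∩ K, ENNReal.ofReal (infDist y (closure E) ^ (-α)) ∂μ := by
        simp only [Metric.infDist_closure]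
        gcongr
        all_goals exact ENNReal.inv_le_inv.mpr hmeas1
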